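/- Right-branch half-period bound: for every η > 1, letting k_max(η) > 1 be the unique number greater than 1 with V(k_max(η)) = η, one has ∫_{1}^{k_max(η)} 2·(η − V(k))^{−1/2} dk > π/√2. -/

import Mathlib

open Real Set MeasureTheory intervalIntegral

lemma sqrt_inv_eq_rpow (u : ℝ) : (Real.sqrt u)⁻¹ = u ^ (-(1/2) : ℝ) := by
  rcases le_or_gt 0 u with hu | hu
  · rw [Real.sqrt_eq_rpow, ← Real.rpow_neg hu]
  · rw [Real.sqrt_eq_zero'.mpr hu.le, inv_zero, Real.rpow_def_of_neg hu]
    norm_num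
    rw [show (1/2)*π = π/2 by ring]
    exact Real.cos_pi_div_two

lemma intInt_inv_sqrt (c d : ℝ) :
    IntervalIntegrable (fun k => (Real.sqrt (d - k))⁻¹) volume c d := by
  have h : IntervalIntegrable (fun x : ℝ => x ^ (-(1/2) : ℝ)) volume (d - c) (d - d) :=
    intervalIntegrable_rpow' (by norm_num)
  have h2 := h.comp_sub_left d
  simp only [sub_sub_cancel, sub_self, sub_zero] at h2
  simpa [sqrt_inv_eq_rpow] using h2

lemma intInt_inv_sqrt_sq {b : ℝ} (hb : 0 < b) :
    IntervalIntegrable (fun k => (Real.sqrt (b^2 - k^2))⁻¹) volume 0 b := by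
  apply IntervalIntegrable.mono_fun' ((intInt_inv_sqrt 0 b).const_mul (Real.sqrt b)⁻¹)
  · exact (((continuous_const.sub (continuous_pow 2)).sqrt).measurable.inv).aestronglyMeasurable
  · rw [Set.uIoc_of_le hb.le]
    filter_upwards [ae_restrict_mem measurableSet_Ioc] with k hk
    have hk0 : 0 < k := hk.1
    have hkb : k ≤ b := hk.2
    have h0 : (0:ℝ) ≤ (Real.sqrt (b^2 - k^2))⁻¹ := by positivity
    rw [Real.norm_eq_abs, abs_of_nonneg h0]
    rcases eq_or_lt_of_le hkb with rfl | hlt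
    · simp
    · have hbk : 0 < b - k := by linarith
      have h1 : Real.sqrt b * Real.sqrt (b - k) ≤ Real.sqrt (b^2 - k^2) := by
        rw [← Real.sqrt_mul hb.le]
        exact Real.sqrt_le_sqrt (by nlinarith)
      have h2 : 0 < Real.sqrt b * Real.sqrt (b - k) := by positivity
      calc (Real.sqrt (b^2 - k^2))⁻¹ ≤ (Real.sqrt b * Real.sqrt (b - k))⁻¹ :=
            inv_anti₀ h2 h1
        _ = (Real.sqrt b)⁻¹ * (Real.sqrt (b - k))⁻¹ := by rw [mul_inv]

lemma integral_inv_sqrt_sq {b : ℝ} (hb : 0 < b) :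
    ∫ k in (0:ℝ)..b, (Real.sqrt (b^2 - k^2))⁻¹ = π / 2 := by
  have key := intervalIntegral.integral_eq_sub_of_hasDeriv_right_of_le hb.le
    (f := fun k => Real.arcsin (k / b)) (f' := fun k => (Real.sqrt (b^2 - k^2))⁻¹)
    ((Real.continuous_arcsin.comp (continuous_id.div_const b)).continuousOn)
    (fun x hx => by
      have hx0 : 0 < x := hx.1
      have hxb : x < b := hx.2
      have hx2 : (0:ℝ) < b^2 - x^2 := by nlinarith
      have h1 : x / b ≠ -1 := by
        have : 0 < x / b := div_pos hx0 hb
        linarith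
      have h2 : x / b ≠ 1 := by
        have : x / b < 1 := (div_lt_one hb).mpr hxb
        linarith
      have hd : HasDerivAt (fun k : ℝ => Real.arcsin (k / b))
          ((1 / Real.sqrt (1 - (x/b)^2)) * (1/b)) x :=
        by have := (Real.hasDerivAt_arcsin h1 h2).comp x ((hasDerivAt_id x).div_const b); exact this
      have hs : Real.sqrt (1 - (x/b)^2) = Real.sqrt (b^2 - x^2) / b := by
        rw [show 1 - (x/b)^2 = (b^2 - x^2)/b^2 by field_simp,
          Real.sqrt_div hx2.le, Real.sqrt_sq hb.le]
      have hne : Real.sqrt (b^2 - x^2) ≠ 0 := by positivity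
      have : (1 / Real.sqrt (1 - (x/b)^2)) * (1/b) = (Real.sqrt (b^2 - x^2))⁻¹ := by
        rw [hs]; field_simp
      rw [this] at hd
      exact hd.hasDerivWithinAt)
    (intInt_inv_sqrt_sq hb)
  rw [key]
  simp [div_self hb.ne', Real.arcsin_one]

noncomputable def V (k : ℝ) : ℝ := k ^ 2 - 2 * Real.log k

lemma hVd {x : ℝ} (hx : 0 < x) : HasDerivAt V (2*x - 2/x) x := by
  have h1 : HasDerivAt (fun k : ℝ => k ^ 2) (2 * x) x := by
    simpa using hasDerivAt_pow 2 x
  have h2 : HasDerivAt (fun k : ℝ => 2 * Real.log k) (2 * x⁻¹) x :=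
    (Real.hasDerivAt_log hx.ne').const_mul 2
  have := h1.sub h2
  rw [div_eq_mul_inv]; exact this

lemma hVmono {a : ℝ} (ha : 1 < a) : StrictMonoOn V (Set.Icc 1 a) := by
  apply strictMonoOn_of_deriv_pos (convex_Icc 1 a)
  · exact fun x hx => ((hVd (by linarith [hx.1] : (0:ℝ) < x)).continuousAt).continuousWithinAt
  · intro x hx
    rw [interior_Icc] at hx
    have hx1 : 1 < x := hx.1
    have hx0 : 0 < x := by linarith
    rw [(hVd hx0).deriv]
    have : 2 / x < 2 := by rw [div_lt_iff₀ hx0]; nlinarith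
    linarith

theorem stmt_10 (kmax : ℝ → ℝ)
    (hkmax : ∀ η : ℝ, 1 < η → 1 < kmax η ∧ V (kmax η) = η)
    (η : ℝ) (hη : 1 < η) :
    (∫ k in (1 : ℝ)..(kmax η), 2 * (Real.sqrt (η - V k))⁻¹) >
      π / Real.sqrt 2 := by
  obtain ⟨ha, hVa⟩ := hkmax η hη
  set a := kmax η with ha_def
  set b := a - 1 with hb_def
  have hb : 0 < b := by simp [hb_def]; linarith
  set f : ℝ → ℝ := fun k => 2 * (Real.sqrt (η - V k))⁻¹ with hf_def
  set g : ℝ → ℝ := fun k => Real.sqrt 2 * (Real.sqrt (b^2 - (k-1)^2))⁻¹ with hg_def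
  -- the parabola comparison: φ = V k - 2(k-1)^2 is strictly decreasing on [1,a]
  have hφ : StrictAntiOn (fun k => V k - 2*(k-1)^2) (Set.Icc 1 a) := by
    apply strictAntiOn_of_deriv_neg (convex_Icc 1 a)
    · apply ContinuousOn.sub
      · exact fun x hx => ((hVd (by linarith [hx.1] : (0:ℝ) < x)).continuousAt).continuousWithinAt
      · fun_prop
    · intro x hx
      rw [interior_Icc] at hx
      have hx1 : 1 < x := hx.1
      have hx0 : 0 < x := by linarith
      have hd : HasDerivAt (fun k : ℝ => V k - 2*(k-1)^2) (2*x - 2/x - 2*(2*(x-1))) x := by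
        have h2 : HasDerivAt (fun k : ℝ => 2*(k-1)^2) (2*(2*(x-1))) x := by
          have := (((hasDerivAt_id x).sub_const 1).pow 2).const_mul 2
          simpa using this
        exact (hVd hx0).sub h2
      rw [hd.deriv]
      have hsq : 0 < (x-1)^2 := pow_pos (by linarith) 2
      have : 2*x - 4*(x-1) < 2 / x := by rw [lt_div_iff₀ hx0]; nlinarith
      linarith
  -- pointwise facts on Ioo 1 a
  have hkey : ∀ k ∈ Set.Ioo 1 a, 0 < η - V k ∧ η - V k < 2 * (b^2 - (k-1)^2) := by
    intro k hk
    have hk1 : (1:ℝ) ≤ k := hk.1.le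
    have hmem : k ∈ Set.Icc 1 a := ⟨hk1, hk.2.le⟩
    have hamem : a ∈ Set.Icc 1 a := ⟨by linarith, le_refl a⟩
    have h1 : V k < V a := hVmono ha hmem hamem hk.2
    have h2 : V a - 2*(a-1)^2 < V k - 2*(k-1)^2 := hφ hmem hamem hk.2
    constructor
    · rw [hVa] at h1; linarith
    · rw [hVa] at h2; simp only [hb_def]; linarith
  -- f > g on Ioo 1 a
  have hpos : ∀ k ∈ Set.Ioo 1 a, 0 < f k - g k := by
    intro k hk
    obtain ⟨hu, huv⟩ := hkey k hk
    have hv : 0 < b^2 - (k-1)^2 := by linarith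
    have hsu : 0 < Real.sqrt (η - V k) := Real.sqrt_pos.mpr hu
    have hsv : 0 < Real.sqrt (b^2 - (k-1)^2) := Real.sqrt_pos.mpr hv
    have hs2 : 0 < Real.sqrt 2 := by positivity
    have h22 : Real.sqrt 2 * Real.sqrt 2 = 2 := Real.mul_self_sqrt (by norm_num)
    have hklt : Real.sqrt (η - V k) < Real.sqrt 2 * Real.sqrt (b^2 - (k-1)^2) := by
      rw [← Real.sqrt_mul (by norm_num : (0:ℝ) ≤ 2)]
      exact Real.sqrt_lt_sqrt hu.le huv
    have : Real.sqrt 2 * (Real.sqrt (b^2 - (k-1)^2))⁻¹ < 2 * (Real.sqrt (η - V k))⁻¹ := by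
      rw [← div_eq_mul_inv, ← div_eq_mul_inv, div_lt_div_iff₀ hsv hsu]
      nlinarith [mul_lt_mul_of_pos_left hklt hs2]
    simp only [hf_def, hg_def]
    linarith
  -- integrability of f
  set c : ℝ := (1 + a)/2 with hc_def
  have hc1 : 1 < c := by simp [hc_def]; linarith
  have hca : c < a := by simp [hc_def]; linarith
  have hfint1 : IntervalIntegrable f volume 1 c := by
    apply ContinuousOn.intervalIntegrable
    rw [Set.uIcc_of_le hc1.le]
    have hVc : V c < η := by
      rw [← hVa]
      exact hVmono ha ⟨hc1.le, hca.le⟩ ⟨by linarith, le_refl a⟩ hca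
    apply ContinuousOn.mul continuousOn_const
    apply ContinuousOn.inv₀
    · apply ContinuousOn.sqrt
      apply ContinuousOn.sub continuousOn_const
      exact fun x hx => ((hVd (by linarith [hx.1] : (0:ℝ) < x)).continuousAt).continuousWithinAt
    · intro x hx
      have : V x ≤ V c := by
        rcases eq_or_lt_of_le hx.2 with heq | hlt
        · rw [heq]
        · exact (hVmono ha ⟨hx.1, by linarith⟩ ⟨hc1.le, hca.le⟩ hlt).le
      have : 0 < Real.sqrt (η - V x) := Real.sqrt_pos.mpr (by linarith)
      exact ne_of_gt this
  have hm : 0 < 2*c - 2/c := by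
    have : 2 / c < 2 := by rw [div_lt_iff₀ (by linarith)]; nlinarith
    linarith
  set m : ℝ := 2*c - 2/c with hm_def
  -- ψ = V k - m k is monotone on [c,a]
  have hψ : MonotoneOn (fun k => V k - m*k) (Set.Icc c a) := by
    apply monotoneOn_of_deriv_nonneg (convex_Icc c a)
    · apply ContinuousOn.sub
      · exact fun x hx => ((hVd (by linarith [hx.1] : (0:ℝ) < x)).continuousAt).continuousWithinAt
      · fun_prop
    · intro x hx
      rw [interior_Icc] at hx
      exact ((hVd (by linarith [hx.1] : (0:ℝ) < x)).sub
        (by simpa using (hasDerivAt_id x).const_mul m)).differentiableAt.differentiableWithinAt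
    · intro x hx
      rw [interior_Icc] at hx
      have hx0 : 0 < x := by linarith [hx.1]
      have hd : HasDerivAt (fun k : ℝ => V k - m*k) (2*x - 2/x - m) x := by
        have := (hVd hx0).sub ((hasDerivAt_id x).const_mul m)
        simp only [mul_one] at this; exact this
      rw [hd.deriv]
      have h1 : 2 / x ≤ 2 / c := by
        apply div_le_div_of_nonneg_left (by norm_num) (by linarith) hx.1.le
      simp only [hm_def]
      linarith [hx.1]
  have hlow : ∀ k ∈ Set.Icc c a, m * (a - k) ≤ η - V k := by
    intro k hk
    have h := hψ hk ⟨hca.le, le_refl a⟩ hk.2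
    simp only at h
    rw [hVa] at h
    nlinarith [h]
  have hfint2 : IntervalIntegrable f volume c a := by
    apply IntervalIntegrable.mono_fun' ((intInt_inv_sqrt c a).const_mul (2 * (Real.sqrt m)⁻¹))
    · apply Measurable.aestronglyMeasurable
      apply Measurable.const_mul
      apply Measurable.inv
      apply Measurable.comp Real.continuous_sqrt.measurable
      apply Measurable.const_sub
      exact (measurable_id.pow_const 2).sub ((Real.measurable_log).const_mul 2)
    · rw [Set.uIoc_of_le hca.le]
      filter_upwards [ae_restrict_mem measurableSet_Ioc] with k hk
      have hk0 : 0 ≤ f k := by simp only [hf_def]; positivity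
      rw [Real.norm_eq_abs, abs_of_nonneg hk0]
      have hbk := hlow k ⟨hk.1.le, hk.2⟩
      rcases eq_or_lt_of_le hk.2 with rfl | hlt
      · simp [hf_def, hVa]
      · have h1 : Real.sqrt m * Real.sqrt (a - k) ≤ Real.sqrt (η - V k) := by
          rw [← Real.sqrt_mul hm.le]
          exact Real.sqrt_le_sqrt hbk
        have h2 : 0 < Real.sqrt m * Real.sqrt (a - k) := by
          have : 0 < a - k := by linarith
          have := Real.sqrt_pos.mpr hm
          have := Real.sqrt_pos.mpr (show 0 < a - k by linarith)
          positivity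
        have h3 : (Real.sqrt (η - V k))⁻¹ ≤ (Real.sqrt m * Real.sqrt (a - k))⁻¹ :=
          inv_anti₀ h2 h1
        calc f k = 2 * (Real.sqrt (η - V k))⁻¹ := rfl
          _ ≤ 2 * (Real.sqrt m * Real.sqrt (a - k))⁻¹ := by linarith
          _ = 2 * (Real.sqrt m)⁻¹ * (Real.sqrt (a - k))⁻¹ := by rw [mul_inv]; ring
  have hfint : IntervalIntegrable f volume 1 a := hfint1.trans hfint2
  -- integrability and value of g
  have hgint0 : IntervalIntegrable (fun k => (Real.sqrt (b^2 - (k-1)^2))⁻¹) volume 1 a := by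
    have h := (intInt_inv_sqrt_sq hb).comp_sub_right 1
    simp only [zero_add] at h
    have hba : b + 1 = a := by simp [hb_def]
    rwa [hba] at h
  have hgint : IntervalIntegrable g volume 1 a := by
    simpa [hg_def] using hgint0.const_mul (Real.sqrt 2)
  have hgval : ∫ k in (1:ℝ)..a, g k = π / Real.sqrt 2 := by
    have hs2 : (0:ℝ) < Real.sqrt 2 := by positivity
    have h22 : Real.sqrt 2 * Real.sqrt 2 = 2 := Real.mul_self_sqrt (by norm_num)
    have h1 : ∫ k in (1:ℝ)..a, g k
        = Real.sqrt 2 * ∫ k in (1:ℝ)..a, (Real.sqrt (b^2 - (k-1)^2))⁻¹ := by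
      simp only [hg_def]
      rw [intervalIntegral.integral_const_mul]
    have h2 : ∫ k in (1:ℝ)..a, (Real.sqrt (b^2 - (k-1)^2))⁻¹
        = ∫ x in (0:ℝ)..b, (Real.sqrt (b^2 - x^2))⁻¹ := by
      have := intervalIntegral.integral_comp_sub_right
        (fun x => (Real.sqrt (b^2 - x^2))⁻¹) 1 (a := 1) (b := a)
      simpa [hb_def] using this
    rw [h1, h2, integral_inv_sqrt_sq hb]
    rw [eq_div_iff hs2.ne']
    linear_combination (π/2) * h22
  -- strict inequality
  have hdiff : 0 < ∫ k in (1:ℝ)..a, (f k - g k) :=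
    intervalIntegral_pos_of_pos_on (hfint.sub hgint) hpos (by linarith)
  rw [intervalIntegral.integral_sub hfint hgint] at hdiff
  have : (∫ k in (1:ℝ)..a, f k) > π / Real.sqrt 2 := by linarith [hgval]
  simpa [hf_def] using this
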